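/- In any graph G that contains three unit rhombi sharing sides in the cyclic pattern of the Möbius ladder M_6 (quadrilaterals 1254, 2365, 1634 all with unit sides), any map f: V → R^2 with |f(u)−f(v)| = 1 on all edges and with f(1)≠f(5), f(2)≠f(4), f(2)≠f(6), f(3)≠f(5), f(1)≠f(3), f(4)≠f(6) must satisfy f(3) = f(6). -/

import Mathlib

lemma rhombus_coord (a0 a1 b0 b1 c0 c1 d0 d1 : ℝ)
    (hab : (a0-b0)^2+(a1-b1)^2 = 1) (hbc : (b0-c0)^2+(b1-c1)^2 = 1)
    (hcd : (c0-d0)^2+(c1-d1)^2 = 1) (hda : (d0-a0)^2+(d1-a1)^2 = 1)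
    (hac : (a0-c0)^2+(a1-c1)^2 ≠ 0) (hbd : (b0-d0)^2+(b1-d1)^2 ≠ 0) :
    b0+d0 = a0+c0 ∧ b1+d1 = a1+c1 := by
  have hpq : (b0-d0)*(c0-a0) + (b1-d1)*(c1-a1) = 0 := by
    linear_combination (hab - hbc + hcd - hda)/2
  have hup : (b0+d0-a0-c0)*(b0-d0) + (b1+d1-a1-c1)*(b1-d1) = 0 := by
    linear_combination hab - hda - (hab - hbc + hcd - hda)/2
  have huq : (b0+d0-a0-c0)*(c0-a0) + (b1+d1-a1-c1)*(c1-a1) = 0 := by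
    linear_combination (hab - hbc - hcd + hda)/2
  have hP : (b0-d0)^2 + (b1-d1)^2 > 0 := lt_of_le_of_ne (by positivity) (Ne.symm hbd)
  have hQ : (c0-a0)^2 + (c1-a1)^2 > 0 := by
    have h := lt_of_le_of_ne (a := (0:ℝ)) (by positivity) (Ne.symm hac)
    nlinarith [h]
  have hD2 : ((b0-d0)*(c1-a1) - (b1-d1)*(c0-a0))^2
      = ((b0-d0)^2 + (b1-d1)^2) * ((c0-a0)^2 + (c1-a1)^2) := by
    linear_combination (-((b0-d0)*(c0-a0) + (b1-d1)*(c1-a1))) * hpq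
  have hD : (b0-d0)*(c1-a1) - (b1-d1)*(c0-a0) ≠ 0 := by
    intro h
    rw [h] at hD2
    nlinarith
  constructor
  · have h0 : (b0+d0-a0-c0) * ((b0-d0)*(c1-a1) - (b1-d1)*(c0-a0)) = 0 := by
      linear_combination (c1-a1)*hup - (b1-d1)*huq
    have := (mul_eq_zero.mp h0).resolve_right hD
    linarith
  · have h1 : (b1+d1-a1-c1) * ((b0-d0)*(c1-a1) - (b1-d1)*(c0-a0)) = 0 := by
      linear_combination (b0-d0)*huq - (c0-a0)*hup
    have := (mul_eq_zero.mp h1).resolve_right hD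
    linarith

lemma dist_sq_coord (x y : EuclideanSpace ℝ (Fin 2)) (h : dist x y = 1) :
    (x 0 - y 0)^2 + (x 1 - y 1)^2 = 1 := by
  rw [EuclideanSpace.dist_eq, Fin.sum_univ_two] at h
  have h2 : dist (x 0) (y 0) ^ 2 + dist (x 1) (y 1) ^ 2 = 1 := by
    have h2 := congrArg (· ^ 2) h
    simpa [Real.sq_sqrt (by positivity : (0:ℝ) ≤ dist (x 0) (y 0) ^ 2 + dist (x 1) (y 1) ^ 2)] using h2
  simpa [Real.dist_eq, sq_abs] using h2

lemma ne_sq_coord (x y : EuclideanSpace ℝ (Fin 2)) (h : x ≠ y) :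
    (x 0 - y 0)^2 + (x 1 - y 1)^2 ≠ 0 := by
  intro h0
  apply h
  have h1 : x 0 - y 0 = 0 ∧ x 1 - y 1 = 0 := by
    constructor <;> nlinarith [sq_nonneg (x 0 - y 0), sq_nonneg (x 1 - y 1)]
  ext i
  fin_cases i
  · show x 0 = y 0
    linarith [h1.1]
  · show x 1 = y 1
    linarith [h1.2]

/-- Three unit rhombi in the cyclic pattern of the Möbius ladder `M₆` (0-based vertices):
any map `f : Fin 6 → ℝ²` realizing the nine edges 01, 12, 23, 34, 45, 50, 03, 14, 25 at
unit distance, with the stated nondegeneracy conditions, must satisfy `f 2 = f 5`. -/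
theorem mobius_rhombi_collapse (f : Fin 6 → EuclideanSpace ℝ (Fin 2))
    (e01 : dist (f 0) (f 1) = 1) (e12 : dist (f 1) (f 2) = 1)
    (e23 : dist (f 2) (f 3) = 1) (e34 : dist (f 3) (f 4) = 1)
    (e45 : dist (f 4) (f 5) = 1) (e50 : dist (f 5) (f 0) = 1)
    (e03 : dist (f 0) (f 3) = 1) (e14 : dist (f 1) (f 4) = 1)
    (e25 : dist (f 2) (f 5) = 1)
    (n04 : f 0 ≠ f 4) (n13 : f 1 ≠ f 3) (n15 : f 1 ≠ f 5)
    (n24 : f 2 ≠ f 4) (n02 : f 0 ≠ f 2) (n35 : f 3 ≠ f 5) :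
    f 2 = f 5 := by
  have d01 := dist_sq_coord _ _ e01
  have d12 := dist_sq_coord _ _ e12
  have d23 := dist_sq_coord _ _ e23
  have d34 := dist_sq_coord _ _ e34
  have d45 := dist_sq_coord _ _ e45
  have d50 := dist_sq_coord _ _ e50
  have d03 := dist_sq_coord _ _ e03
  have d14 := dist_sq_coord _ _ e14
  have d25 := dist_sq_coord _ _ e25
  -- rhombus 0,1,4,3 : f1 + f3 = f0 + f4
  have R1 := rhombus_coord (f 0 0) (f 0 1) (f 1 0) (f 1 1) (f 4 0) (f 4 1) (f 3 0) (f 3 1)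
    d01 (by linear_combination d14) (by linear_combination d34) (by linear_combination d03)
    (ne_sq_coord _ _ n04) (ne_sq_coord _ _ n13)
  -- rhombus 1,2,5,4 : f2 + f4 = f1 + f5
  have R2 := rhombus_coord (f 1 0) (f 1 1) (f 2 0) (f 2 1) (f 5 0) (f 5 1) (f 4 0) (f 4 1)
    d12 (by linear_combination d25) (by linear_combination d45) (by linear_combination d14)
    (ne_sq_coord _ _ n15) (ne_sq_coord _ _ n24)
  -- rhombus 2,3,0,5 : f3 + f5 = f2 + f0
  have R3 := rhombus_coord (f 2 0) (f 2 1) (f 3 0) (f 3 1) (f 0 0) (f 0 1) (f 5 0) (f 5 1)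
    d23 (by linear_combination d03) (by linear_combination d50) (by linear_combination d25)
    (ne_sq_coord _ _ n02.symm) (ne_sq_coord _ _ n35)
  ext i
  fin_cases i
  · show f 2 0 = f 5 0
    linarith [R1.1, R2.1, R3.1]
  · show f 2 1 = f 5 1
    linarith [R1.2, R2.2, R3.2]
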